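/- For every integer c ≥ 2, the hypergraph G whose vertex set is {1, …, 3c−3} and whose edges are all (2c−2)-element subsets of the vertex set is (c−1)-intersecting, and G admits no c-strong coloring using at most 2c − 2 colors. -/

import Mathlib

/-- For every c ≥ 2, the hypergraph whose vertices are {1,…,3c−3} and whose edges are
all (2c−2)-element subsets is (c−1)-intersecting and has no c-strong coloring with at
most 2c − 2 colors. -/
theorem stmt_6 (c : ℕ) (hc : 2 ≤ c) :
    (∀ e₁ ∈ {e : Finset (Fin (3 * c - 3)) | e.card = 2 * c - 2},
     ∀ e₂ ∈ {e : Finset (Fin (3 * c - 3)) | e.card = 2 * c - 2},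
      c - 1 ≤ (e₁ ∩ e₂).card) ∧
    ¬ ∃ f : Fin (3 * c - 3) → Fin (2 * c - 2),
      ∀ e ∈ {e : Finset (Fin (3 * c - 3)) | e.card = 2 * c - 2},
        min c e.card ≤ (e.image f).card := by
  constructor
  · intro e₁ h₁ e₂ h₂
    simp only [Set.mem_setOf_eq] at h₁ h₂
    have h3 := Finset.card_inter_add_card_union e₁ e₂
    have h4 : (e₁ ∪ e₂).card ≤ 3 * c - 3 := by
      simpa using Finset.card_le_univ (e₁ ∪ e₂)
    omega
  · rintro ⟨f, hf⟩
    set s : Fin (2 * c - 2) → ℕ :=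
      fun j => (Finset.univ.filter (fun x => f x = j)).card with hs
    -- total count
    have htot : ∑ j : Fin (2 * c - 2), s j = 3 * c - 3 := by
      have h := Finset.card_eq_sum_card_fiberwise (f := f)
        (s := (Finset.univ : Finset (Fin (3 * c - 3)))) (t := Finset.univ)
        (fun x _ => Finset.mem_univ _)
      simpa [hs] using h.symm
    set B : Finset (Fin (2 * c - 2)) := Finset.univ.filter (fun j => 2 ≤ s j) with hB
    set A : Finset (Fin (2 * c - 2)) := Finset.univ.filter (fun j => s j = 1) with hA
    have hdisj : Disjoint B A := by
      rw [Finset.disjoint_left]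
      intro j hj hj'
      rw [hB, Finset.mem_filter] at hj
      rw [hA, Finset.mem_filter] at hj'
      omega
    have hsplit : ∑ j ∈ B, s j + A.card = 3 * c - 3 := by
      have h1 : ∑ j ∈ B ∪ A, s j = ∑ j : Fin (2 * c - 2), s j := by
        refine Finset.sum_subset (Finset.subset_univ _) (fun j _ hj => ?_)
        simp only [hB, hA, Finset.mem_union, Finset.mem_filter, Finset.mem_univ,
          true_and] at hj
        omega
      have h2 : ∑ j ∈ B ∪ A, s j = ∑ j ∈ B, s j + ∑ j ∈ A, s j :=
        Finset.sum_union hdisj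
      have h3 : ∑ j ∈ A, s j = A.card := by
        rw [Finset.sum_congr rfl (fun j hj => (Finset.mem_filter.mp hj).2)]
        simp [hA]
      omega
    have hcards : B.card + A.card ≤ 2 * c - 2 := by
      have h1 : (B ∪ A).card = B.card + A.card := Finset.card_union_of_disjoint hdisj
      have h2 := Finset.card_le_univ (B ∪ A)
      simp only [Finset.card_univ, Fintype.card_fin] at h2
      omega
    -- key claim : few colors covering many vertices
    have key : ∃ C : Finset (Fin (2 * c - 2)), C.card ≤ c - 1 ∧ 2 * c - 2 ≤ ∑ j ∈ C, s j := by
      by_cases hBc : c - 1 ≤ B.card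
      · obtain ⟨C, hCB, hCcard⟩ := Finset.exists_subset_card_eq hBc
        refine ⟨C, le_of_eq hCcard, ?_⟩
        have h1 : C.card • 2 ≤ ∑ j ∈ C, s j :=
          Finset.card_nsmul_le_sum C s 2 (fun j hj => (Finset.mem_filter.mp (hCB hj)).2)
        simp only [smul_eq_mul] at h1
        omega
      · by_cases hSB : 2 * c - 2 ≤ ∑ j ∈ B, s j
        · exact ⟨B, by omega, hSB⟩
        · have hAcard : c - 1 - B.card ≤ A.card := by omega
          obtain ⟨S, hSA, hScard⟩ := Finset.exists_subset_card_eq hAcard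
          have hdisjBS : Disjoint B S := hdisj.mono_right hSA
          refine ⟨B ∪ S, ?_, ?_⟩
          · rw [Finset.card_union_of_disjoint hdisjBS, hScard]
            omega
          · rw [Finset.sum_union hdisjBS]
            have hS1 : ∑ j ∈ S, s j = S.card := by
              rw [Finset.sum_congr rfl (fun j hj => (Finset.mem_filter.mp (hSA hj)).2)]
              simp
            omega
    obtain ⟨C, hCcard, hCsum⟩ := key
    -- vertices colored within C
    have heq : (Finset.univ.filter (fun x => f x ∈ C)).card = ∑ j ∈ C, s j := by
      rw [Finset.card_eq_sum_card_fiberwise (f := f) (s := Finset.univ.filter (fun x => f x ∈ C)) (t := C)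
        (fun x hx => (Finset.mem_filter.mp hx).2)]
      refine Finset.sum_congr rfl (fun j hj => ?_)
      congr 1
      ext x
      simp only [Finset.mem_filter, Finset.mem_univ, true_and]
      exact ⟨fun h => h.2, fun h => ⟨h ▸ hj, h⟩⟩
    have hPC : 2 * c - 2 ≤ (Finset.univ.filter (fun x => f x ∈ C)).card := by omega
    obtain ⟨e, hesub, hecard⟩ := Finset.exists_subset_card_eq hPC
    have h1 := hf e (by simpa using hecard)
    have h2 : (e.image f).card ≤ c - 1 := by
      refine le_trans (Finset.card_le_card ?_) hCcard
      intro y hy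
      obtain ⟨x, hx, rfl⟩ := Finset.mem_image.mp hy
      exact (Finset.mem_filter.mp (hesub hx)).2
    have hcle : c ≤ 2 * c - 2 := by omega
    rw [hecard, min_eq_left hcle] at h1
    omega
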